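/- With A the quantum complete intersection as below, let α_{i,j}, β_{i,j} ∈ k for 0 ≤ i,j ≤ p−1. There exists a derivation f of A with f(x) = Σ_{0≤i,j≤p−1} α_{i,j} x^i y^j and f(y) = Σ_{0≤i,j≤p−1} β_{i,j} x^i y^j if and only if the following three conditions hold: (1) α_{i,j−1}(1 − q^{i−1}) + β_{i−1,j}(1 − q^{j−1}) = 0 for all 1 ≤ i,j ≤ p−1; (2) α_{0,j−1} = 0 for all 1 ≤ j ≤ p−1; (3) β_{i−1,0} = 0 for all 1 ≤ i ≤ p−1. In particular, every derivation of A maps J(A) into J(A). -/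

import Mathlib

/-!
Context: `A` is the quantum complete intersection
`A = k⟨x,y⟩/(x^p, y^p, yx − q·xy)` over a field `k` of odd prime characteristic `p`,
where `q ∈ k^×` has finite multiplicative order `e` with `2 ≤ e` and `e ∣ p − 1`.
`HH¹(A) = Der(A)/IDer(A)` is the first Hochschild cohomology of `A`, a Lie algebra
with bracket induced by `[f,g] = f∘g − g∘f`.
-/

section HochschildPrelim

variable (k : Type*) [CommRing k] (A : Type*) [Ring A] [Algebra k A]

attribute [local instance 100] LieRing.ofAssociativeRing

/-- A derivation of the `k`-algebra `A`: a `k`-linear map satisfying the Leibniz rule. -/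
def IsDeriv (f : Module.End k A) : Prop := ∀ a b : A, f (a * b) = a * f b + f a * b

/-- An inner derivation `[c, -] : a ↦ c*a - a*c`. -/
def IsInner (f : Module.End k A) : Prop := ∃ c : A, ∀ a : A, f a = c * a - a * c

/-- The Lie algebra `Der(A)` of derivations, as a Lie subalgebra of `End_k(A)`
(with the commutator bracket). -/
def Der : LieSubalgebra k (Module.End k A) where
  carrier := {f | IsDeriv k A f}
  add_mem' := by
    intro f g hf hg
    intro a b
    simp only [LinearMap.add_apply, hf a b, hg a b]
    noncomm_ring
  zero_mem' := by intro a b; simp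
  smul_mem' := by
    intro c f hf
    intro a b
    simp only [LinearMap.smul_apply, hf a b, smul_add, mul_smul_comm, smul_mul_assoc]
  lie_mem' := by
    intro f g hf hg
    intro a b
    rw [Ring.lie_def]
    simp only [LinearMap.sub_apply, Module.End.mul_apply]
    rw [hg a b, map_add, hf a (g b), hf (g a) b, hf a b, map_add, hg a (f b), hg (f a) b,
      mul_sub, sub_mul]
    abel

/-- The inner derivations form a Lie ideal `IDer(A)` of `Der(A)`. -/
def IDer : LieIdeal k (Der k A) where
  carrier := {f | IsInner k A f.1}
  add_mem' := by
    rintro f g ⟨c, hc⟩ ⟨d, hd⟩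
    refine ⟨c + d, fun a => ?_⟩
    show f.1 a + g.1 a = _
    rw [hc, hd]
    noncomm_ring
  zero_mem' := ⟨0, fun a => by simp⟩
  smul_mem' := by
    rintro t f ⟨c, hc⟩
    refine ⟨t • c, fun a => ?_⟩
    show t • f.1 a = _
    rw [hc, smul_sub, smul_mul_assoc, mul_smul_comm]
  lie_mem := by
    rintro x m ⟨c, hc⟩
    refine ⟨x.1 c, fun a => ?_⟩
    have hx : IsDeriv k A x.1 := x.2
    have h : (↑(⁅x, m⁆ : Der k A) : Module.End k A) a = x.1 (m.1 a) - m.1 (x.1 a) := rfl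
    rw [h, hc, hc, map_sub, hx c a, hx a c]
    abel

/-- The first Hochschild cohomology `HH¹(A) = Der(A)/IDer(A)`, as a quotient Lie algebra. -/
abbrev HH1 := Der k A ⧸ IDer k A

end HochschildPrelim


open Finset

namespace QCI
variable {k : Type*} [Field k] {A : Type*} [Ring A] [Algebra k A]

def mon (x y : A) (i j : ℕ) : A := x ^ i * y ^ j
def G (q : k) (n d : ℕ) : k := ∑ t ∈ range n, (q ^ d) ^ t
lemma G_zero (q : k) (d : ℕ) : G q 0 d = 0 := by simp [G]
lemma G_one (q : k) (d : ℕ) : G q 1 d = 1 := by simp [G]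
lemma G_add (q : k) (a c d : ℕ) : G q (a + c) d = G q c d + (q ^ d) ^ c * G q a d := by
  unfold G
  rw [add_comm a c, Finset.sum_range_add, Finset.mul_sum]
  congr 1
  exact Finset.sum_congr rfl fun t _ => by rw [pow_add]
lemma G_geom (q : k) (n d : ℕ) : (1 - q ^ d) * G q n d = 1 - (q ^ d) ^ n := by
  have h := geom_sum_mul (q ^ d) n
  unfold G
  linear_combination -h
lemma G_base_one {q : k} {d : ℕ} (h : q ^ d = 1) (n : ℕ) : G q n d = (n : k) := by
  simp [G, h]

section mul
variable {p : ℕ} {q : k} {x y : A} {α β : ℕ → ℕ → k}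

lemma y_xpow (hyx : y * x = q • (x * y)) (c : ℕ) : y * x ^ c = (q ^ c) • (x ^ c * y) := by
  induction c with
  | zero => simp
  | succ n ih =>
    rw [pow_succ, ← mul_assoc, ih, smul_mul_assoc, mul_assoc, hyx, mul_smul_comm,
      smul_smul, ← pow_succ, mul_assoc]

lemma ypow_xpow (hyx : y * x = q • (x * y)) (b c : ℕ) :
    y ^ b * x ^ c = (q ^ (b * c)) • (x ^ c * y ^ b) := by
  induction b with
  | zero => simp
  | succ n ih =>
    rw [pow_succ, mul_assoc, y_xpow hyx, mul_smul_comm, ← mul_assoc, ih, smul_mul_assoc,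
      smul_smul, ← pow_add, mul_assoc]
    congr 2
    ring

lemma mon_mul (hyx : y * x = q • (x * y)) (a b c d : ℕ) :
    mon x y a b * mon x y c d = (q ^ (b * c)) • mon x y (a + c) (b + d) := by
  unfold mon
  rw [mul_assoc, ← mul_assoc (y ^ b), ypow_xpow hyx, smul_mul_assoc, mul_smul_comm,
    pow_add, pow_add]
  congr 1
  rw [mul_assoc, mul_assoc]

lemma mon_zero (hx : x ^ p = 0) (hy : y ^ p = 0) {i j : ℕ} (h : p ≤ i ∨ p ≤ j) :
    mon x y i j = 0 := by
  unfold mon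
  rcases h with h | h
  · rw [show i = p + (i - p) by omega, pow_add, hx, zero_mul, zero_mul]
  · rw [show j = p + (j - p) by omega, pow_add, hy, zero_mul, mul_zero]

end mul

/-- candidate derivation values -/
def FF (q : k) (p : ℕ) (α β : ℕ → ℕ → k) (x y : A) (i j : ℕ) : A :=
  (∑ s ∈ range p, ∑ t ∈ range p,
     ((if s + 1 < p then α (s+1) t else 0) * G q i t
       + (if t + 1 < p then β s (t+1) else 0) * G q j s) • mon x y (i+s) (j+t))
  + (∑ t ∈ range p, (α 0 t * G q i t) • mon x y (i-1) (j+t))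
  + (∑ s ∈ range p, (β s 0 * G q j s) • mon x y (i+s) (j-1))

section main
variable {p : ℕ} {q : k} {x y : A} {α β : ℕ → ℕ → k}

lemma leib1 (hyx : y * x = q • (x * y)) (hx : x ^ p = 0) (hy : y ^ p = 0)
    (hp2 : 2 ≤ p) (hqp1 : q ^ (p-1) = 1)
    (hC1 : ∀ i j : ℕ, 1 ≤ i → i ≤ p - 1 → 1 ≤ j → j ≤ p - 1 →
        α i (j - 1) * (1 - q ^ (i - 1)) + β (i - 1) j * (1 - q ^ (j - 1)) = 0)
    (i j kk l : ℕ) :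
    (q ^ (j*kk)) • (∑ s ∈ range p, ∑ t ∈ range p,
       ((if s + 1 < p then α (s+1) t else 0) * G q (i+kk) t
         + (if t + 1 < p then β s (t+1) else 0) * G q (j+l) s) • mon x y (i+kk+s) (j+l+t))
    = mon x y i j * (∑ s ∈ range p, ∑ t ∈ range p,
       ((if s + 1 < p then α (s+1) t else 0) * G q kk t
         + (if t + 1 < p then β s (t+1) else 0) * G q l s) • mon x y (kk+s) (l+t))
    + (∑ s ∈ range p, ∑ t ∈ range p,
       ((if s + 1 < p then α (s+1) t else 0) * G q i t
         + (if t + 1 < p then β s (t+1) else 0) * G q j s) • mon x y (i+s) (j+t)) * mon x y kk l := by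
  rw [Finset.smul_sum, Finset.mul_sum, Finset.sum_mul, ← Finset.sum_add_distrib]
  refine Finset.sum_congr rfl fun s hs => ?_
  rw [Finset.smul_sum, Finset.mul_sum, Finset.sum_mul, ← Finset.sum_add_distrib]
  refine Finset.sum_congr rfl fun t ht => ?_
  simp only [mem_range] at hs ht
  rw [mul_smul_comm, smul_mul_assoc, mon_mul hyx, mon_mul hyx, smul_smul, smul_smul, smul_smul]
  rw [show i+(kk+s) = i+kk+s by omega, show j+(l+t) = j+l+t by omega,
    show i+s+kk = i+kk+s by omega, show j+t+l = j+l+t by omega]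
  rw [← add_smul, ← sub_eq_zero, ← sub_smul]
  by_cases hs1 : s = p - 1
  · by_cases hik : i + kk = 0
    · have hi : i = 0 := by omega
      have hk : kk = 0 := by omega
      subst hi hk
      refine smul_eq_zero_of_left ?_ _
      simp only [Nat.zero_add, Nat.add_zero, G_zero, mul_zero, zero_add, Nat.mul_zero,
        pow_zero, one_mul, mul_one]
      rw [show j+l = l+j from add_comm j l, G_add q l j s,
        show j*s = s*j from mul_comm j s, pow_mul]
      ring
    · rw [mon_zero hx hy (Or.inl (by omega)), smul_zero]
  · by_cases ht1 : t = p - 1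
    · by_cases hjl : j + l = 0
      · have hj : j = 0 := by omega
        have hl : l = 0 := by omega
        subst hj hl
        refine smul_eq_zero_of_left ?_ _
        simp only [Nat.zero_add, Nat.add_zero, G_zero, mul_zero, zero_add, add_zero,
          Nat.zero_mul, pow_zero, one_mul, mul_one]
        rw [G_add q i kk t, pow_mul]
        ring
      · rw [mon_zero hx hy (Or.inr (by omega)), smul_zero]
    · rw [if_pos (show s + 1 < p by omega), if_pos (show t + 1 < p by omega)]
      have H := hC1 (s+1) (t+1) (by omega) (by omega) (by omega) (by omega)
      simp only [Nat.add_sub_cancel] at H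
      rw [G_add q i kk t, show j+l = l+j from add_comm j l, G_add q l j s]
      rw [show (q ^ (j * (kk + s))) = q ^ (j*kk) * (q^s)^j by
        rw [← pow_mul, ← pow_add]; congr 1; ring]
      rw [show (q ^ ((j + t) * kk)) = q ^ (j*kk) * (q^t)^kk by
        rw [← pow_mul, ← pow_add]; congr 1; ring]
      refine smul_eq_zero_of_left ?_ _
      linear_combination (q^(j*kk) * G q j s * G q kk t) * H
        - (q^(j*kk) * (α (s+1) t) * G q kk t) * (G_geom q j s)
        - (q^(j*kk) * (β s (t+1)) * G q j s) * (G_geom q kk t)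

end main
end QCI

namespace QCI
variable {k : Type*} [Field k] {A : Type*} [Ring A] [Algebra k A]
variable {p : ℕ} {q : k} {x y : A} {α β : ℕ → ℕ → k}

lemma leib2 (hyx : y * x = q • (x * y)) (hx : x ^ p = 0) (hy : y ^ p = 0)
    (hp2 : 2 ≤ p) (hqp1 : q ^ (p-1) = 1)
    (hC2 : ∀ j : ℕ, 1 ≤ j → j ≤ p - 1 → α 0 (j-1) = 0) (i j kk l : ℕ) :
    (q ^ (j*kk)) • (∑ t ∈ range p, (α 0 t * G q (i+kk) t) • mon x y (i+kk-1) (j+l+t))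
    = mon x y i j * (∑ t ∈ range p, (α 0 t * G q kk t) • mon x y (kk-1) (l+t))
    + (∑ t ∈ range p, (α 0 t * G q i t) • mon x y (i-1) (j+t)) * mon x y kk l := by
  rw [Finset.smul_sum, Finset.mul_sum, Finset.sum_mul, ← Finset.sum_add_distrib]
  refine Finset.sum_congr rfl fun t ht => ?_
  simp only [mem_range] at ht
  rw [mul_smul_comm, smul_mul_assoc, mon_mul hyx, mon_mul hyx, smul_smul, smul_smul, smul_smul]
  by_cases ht1 : t = p - 1
  · subst ht1
    by_cases hjl : j + l = 0
    · have hj : j = 0 := by omega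
      have hl : l = 0 := by omega
      subst hj hl
      simp only [Nat.zero_mul, Nat.zero_add, Nat.add_zero, pow_zero, one_mul, mul_one]
      rw [pow_mul, hqp1, one_pow, G_base_one hqp1, G_base_one hqp1, G_base_one hqp1, mul_one]
      rcases Nat.eq_zero_or_pos i with hi | hi
      · subst hi
        simp only [Nat.zero_add, Nat.cast_zero, mul_zero, zero_smul, add_zero]
      · rcases Nat.eq_zero_or_pos kk with hk | hk
        · subst hk
          simp only [Nat.add_zero, Nat.cast_zero, mul_zero, zero_smul, zero_add]
        · rw [show i+(kk-1) = i+kk-1 by omega, show (i-1)+kk = i+kk-1 by omega, ← add_smul]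
          congr 1
          push_cast
          ring
    · rw [mon_zero hx hy (by omega : p ≤ i+kk-1 ∨ p ≤ j+l+(p-1)),
        mon_zero hx hy (by omega : p ≤ i+(kk-1) ∨ p ≤ j+(l+(p-1))),
        mon_zero hx hy (by omega : p ≤ (i-1)+kk ∨ p ≤ (j+(p-1))+l)]
      simp
  · have hα : α 0 t = 0 := by
      have := hC2 (t+1) (by omega) (by omega)
      simpa using this
    simp [hα]

lemma leib3 (hyx : y * x = q • (x * y)) (hx : x ^ p = 0) (hy : y ^ p = 0)
    (hp2 : 2 ≤ p) (hqp1 : q ^ (p-1) = 1)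
    (hC3 : ∀ i : ℕ, 1 ≤ i → i ≤ p - 1 → β (i-1) 0 = 0) (i j kk l : ℕ) :
    (q ^ (j*kk)) • (∑ s ∈ range p, (β s 0 * G q (j+l) s) • mon x y (i+kk+s) (j+l-1))
    = mon x y i j * (∑ s ∈ range p, (β s 0 * G q l s) • mon x y (kk+s) (l-1))
    + (∑ s ∈ range p, (β s 0 * G q j s) • mon x y (i+s) (j-1)) * mon x y kk l := by
  rw [Finset.smul_sum, Finset.mul_sum, Finset.sum_mul, ← Finset.sum_add_distrib]
  refine Finset.sum_congr rfl fun s hs => ?_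
  simp only [mem_range] at hs
  rw [mul_smul_comm, smul_mul_assoc, mon_mul hyx, mon_mul hyx, smul_smul, smul_smul, smul_smul]
  by_cases hs1 : s = p - 1
  · subst hs1
    by_cases hik : i + kk = 0
    · have hi : i = 0 := by omega
      have hk : kk = 0 := by omega
      subst hi hk
      simp only [Nat.zero_mul, Nat.mul_zero, Nat.zero_add, Nat.add_zero, pow_zero, one_mul,
        mul_one]
      rw [show j*(p-1) = (p-1)*j by ring, pow_mul, hqp1, one_pow,
        G_base_one hqp1, G_base_one hqp1, G_base_one hqp1, mul_one]
      rcases Nat.eq_zero_or_pos j with hj | hj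
      · subst hj
        simp only [Nat.zero_add, Nat.cast_zero, mul_zero, zero_smul, add_zero]
      · rcases Nat.eq_zero_or_pos l with hl | hl
        · subst hl
          simp only [Nat.add_zero, Nat.cast_zero, mul_zero, zero_smul, zero_add]
        · rw [show j+(l-1) = j+l-1 by omega, show (j-1)+l = j+l-1 by omega, ← add_smul]
          congr 1
          push_cast
          ring
    · rw [mon_zero hx hy (by omega : p ≤ i+kk+(p-1) ∨ p ≤ j+l-1),
        mon_zero hx hy (by omega : p ≤ i+(kk+(p-1)) ∨ p ≤ j+(l-1)),
        mon_zero hx hy (by omega : p ≤ (i+(p-1))+kk ∨ p ≤ (j-1)+l)]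
      simp
  · have hβ : β s 0 = 0 := by
      have := hC3 (s+1) (by omega) (by omega)
      simpa using this
    simp [hβ]

end QCI

namespace QCI
variable {k : Type*} [Field k] {A : Type*} [Ring A] [Algebra k A]
variable {p : ℕ} {q : k} {x y : A} {α β : ℕ → ℕ → k}

lemma sum_range_pred {M : Type*} [AddCommMonoid M] {n : ℕ} (hn : 1 ≤ n) (f : ℕ → M) :
    ∑ i ∈ range n, f i = (∑ i ∈ range (n-1), f (i+1)) + f 0 := by
  obtain ⟨m, rfl⟩ : ∃ m, n = m + 1 := ⟨n-1, by omega⟩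
  simp [Finset.sum_range_succ']

lemma sum_range_pred' {M : Type*} [AddCommMonoid M] {n : ℕ} (hn : 1 ≤ n) (f : ℕ → M) :
    ∑ i ∈ range n, f i = (∑ i ∈ range (n-1), f i) + f (n-1) := by
  obtain ⟨m, rfl⟩ : ∃ m, n = m + 1 := ⟨n-1, by omega⟩
  simp [Finset.sum_range_succ]

lemma FF_leibniz (hyx : y * x = q • (x * y)) (hx : x ^ p = 0) (hy : y ^ p = 0)
    (hp2 : 2 ≤ p) (hqp1 : q ^ (p-1) = 1)
    (hC1 : ∀ i j : ℕ, 1 ≤ i → i ≤ p - 1 → 1 ≤ j → j ≤ p - 1 →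
        α i (j - 1) * (1 - q ^ (i - 1)) + β (i - 1) j * (1 - q ^ (j - 1)) = 0)
    (hC2 : ∀ j : ℕ, 1 ≤ j → j ≤ p - 1 → α 0 (j-1) = 0)
    (hC3 : ∀ i : ℕ, 1 ≤ i → i ≤ p - 1 → β (i-1) 0 = 0) (i j kk l : ℕ) :
    (q ^ (j*kk)) • FF q p α β x y (i+kk) (j+l)
    = mon x y i j * FF q p α β x y kk l + FF q p α β x y i j * mon x y kk l := by
  unfold FF
  rw [smul_add, smul_add, mul_add, mul_add, add_mul, add_mul,
    leib1 hyx hx hy hp2 hqp1 hC1 i j kk l, leib2 hyx hx hy hp2 hqp1 hC2 i j kk l,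
    leib3 hyx hx hy hp2 hqp1 hC3 i j kk l]
  abel

lemma FF_zero (hx : x ^ p = 0) (hy : y ^ p = 0)
    (hp2 : 2 ≤ p) (hqp1 : q ^ (p-1) = 1) (hp0 : (p:k) = 0)
    (hC2 : ∀ j : ℕ, 1 ≤ j → j ≤ p - 1 → α 0 (j-1) = 0)
    (hC3 : ∀ i : ℕ, 1 ≤ i → i ≤ p - 1 → β (i-1) 0 = 0)
    {i j : ℕ} (h : p ≤ i ∨ p ≤ j) : FF q p α β x y i j = 0 := by
  unfold FF
  rw [Finset.sum_eq_zero, Finset.sum_eq_zero, Finset.sum_eq_zero, add_zero, add_zero]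
  · intro s hs
    simp only [mem_range] at hs
    by_cases hj : p + 1 ≤ j
    · rw [mon_zero hx hy (by omega : p ≤ i+s ∨ p ≤ j-1), smul_zero]
    · by_cases hjp : j = p
      · by_cases hs1 : s = p - 1
        · rw [hjp, hs1, G_base_one hqp1, hp0, mul_zero, zero_smul]
        · have hβ : β s 0 = 0 := by
            have := hC3 (s+1) (by omega) (by omega)
            simpa using this
          simp [hβ]
      · have hi : p ≤ i := by omega
        rw [mon_zero hx hy (by omega : p ≤ i+s ∨ p ≤ j-1), smul_zero]
  · intro t ht
    simp only [mem_range] at ht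
    by_cases hj : p ≤ j
    · rw [mon_zero hx hy (by omega : p ≤ i-1 ∨ p ≤ j+t), smul_zero]
    · have hi : p ≤ i := by omega
      by_cases hip : p + 1 ≤ i
      · rw [mon_zero hx hy (by omega : p ≤ i-1 ∨ p ≤ j+t), smul_zero]
      · have hip' : i = p := by omega
        by_cases ht1 : t = p - 1
        · rw [hip', ht1, G_base_one hqp1, hp0, mul_zero, zero_smul]
        · have hα : α 0 t = 0 := by
            have := hC2 (t+1) (by omega) (by omega)
            simpa using this
          simp [hα]
  · intro s hs
    refine Finset.sum_eq_zero fun t ht => ?_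
    rw [mon_zero hx hy (by omega : p ≤ i+s ∨ p ≤ j+t), smul_zero]

lemma FF_x (hp2 : 2 ≤ p) :
    FF q p α β x y 1 0 = ∑ c ∈ range p, ∑ d ∈ range p, α c d • mon x y c d := by
  have hps : p - 1 + 1 = p := by omega
  unfold FF
  simp only [G_one, G_zero, mul_one, mul_zero, add_zero, zero_smul, Finset.sum_const_zero,
    Nat.zero_add, Nat.sub_self]
  have h1 : ∀ s : ℕ, (∑ t ∈ range p, (if s + 1 < p then α (s+1) t else 0) • mon x y (1+s) t)
      = if s + 1 < p then ∑ t ∈ range p, α (s+1) t • mon x y (s+1) t else 0 := by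
    intro s
    by_cases hsp : s + 1 < p
    · simp only [if_pos hsp, add_comm 1 s]
    · simp only [if_neg hsp, zero_smul, Finset.sum_const_zero]
  rw [Finset.sum_congr rfl fun s _ => h1 s]
  have h2 : (∑ s ∈ range p, if s + 1 < p then ∑ t ∈ range p, α (s+1) t • mon x y (s+1) t else 0)
      = ∑ s ∈ range (p-1), ∑ t ∈ range p, α (s+1) t • mon x y (s+1) t := by
    rw [sum_range_pred' (by omega), if_neg (by omega), add_zero]
    exact Finset.sum_congr rfl fun s hs => by
      rw [if_pos (by simp only [mem_range] at hs; omega)]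
  rw [h2]
  have h3 : (∑ c ∈ range p, ∑ d ∈ range p, α c d • mon x y c d)
      = (∑ s ∈ range (p-1), ∑ d ∈ range p, α (s+1) d • mon x y (s+1) d)
        + ∑ d ∈ range p, α 0 d • mon x y 0 d := by
    exact sum_range_pred (by omega) _
  rw [h3]

lemma FF_y (hp2 : 2 ≤ p) :
    FF q p α β x y 0 1 = ∑ c ∈ range p, ∑ d ∈ range p, β c d • mon x y c d := by
  have hps : p - 1 + 1 = p := by omega
  unfold FF
  simp only [G_one, G_zero, mul_one, mul_zero, zero_add, add_zero, zero_mul, zero_smul,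
    Finset.sum_const_zero, Nat.zero_add, Nat.sub_self]
  have h1 : ∀ s : ℕ, (∑ t ∈ range p, (if t + 1 < p then β s (t+1) else 0) • mon x y s (1+t))
      = ∑ t ∈ range (p-1), β s (t+1) • mon x y s (t+1) := by
    intro s
    rw [sum_range_pred' (by omega), if_neg (by omega), zero_smul, add_zero]
    exact Finset.sum_congr rfl fun t ht => by
      rw [if_pos (by simp only [mem_range] at ht; omega), add_comm 1 t]
  rw [Finset.sum_congr rfl fun s _ => h1 s]
  have h3 : (∑ c ∈ range p, ∑ d ∈ range p, β c d • mon x y c d)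
      = ∑ c ∈ range p, ((∑ d ∈ range (p-1), β c (d+1) • mon x y c (d+1))
          + β c 0 • mon x y c 0) := by
    refine Finset.sum_congr rfl fun c _ => ?_
    exact sum_range_pred (by omega) _
  rw [h3, Finset.sum_add_distrib]

end QCI

namespace QCI
variable {k : Type*} [Field k] {A : Type*} [Ring A] [Algebra k A]
variable {p : ℕ} {q : k} {x y : A} {α β : ℕ → ℕ → k}

section basis
variable (b : Module.Basis (Fin p × Fin p) k A)

lemma b_mon (hb : ∀ ij : Fin p × Fin p, b ij = x ^ (ij.1 : ℕ) * y ^ (ij.2 : ℕ))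
    {i j : ℕ} (hi : i < p) (hj : j < p) :
    b (⟨i, hi⟩, ⟨j, hj⟩) = mon x y i j := by
  rw [hb]; rfl

lemma f_mon (hb : ∀ ij : Fin p × Fin p, b ij = x ^ (ij.1 : ℕ) * y ^ (ij.2 : ℕ))
    (hx : x ^ p = 0) (hy : y ^ p = 0)
    (hp2 : 2 ≤ p) (hqp1 : q ^ (p-1) = 1) (hp0 : (p:k) = 0)
    (hC2 : ∀ j : ℕ, 1 ≤ j → j ≤ p - 1 → α 0 (j-1) = 0)
    (hC3 : ∀ i : ℕ, 1 ≤ i → i ≤ p - 1 → β (i-1) 0 = 0) (u v : ℕ) :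
    (b.constr k (fun ij : Fin p × Fin p => FF q p α β x y ij.1 ij.2)) (mon x y u v)
      = FF q p α β x y u v := by
  by_cases h : u < p ∧ v < p
  · rw [← b_mon b hb h.1 h.2, Module.Basis.constr_basis]
  · rw [mon_zero hx hy (by omega), map_zero,
      FF_zero hx hy hp2 hqp1 hp0 hC2 hC3 (by omega)]

lemma f_deriv (hb : ∀ ij : Fin p × Fin p, b ij = x ^ (ij.1 : ℕ) * y ^ (ij.2 : ℕ))
    (hyx : y * x = q • (x * y)) (hx : x ^ p = 0) (hy : y ^ p = 0)
    (hp2 : 2 ≤ p) (hqp1 : q ^ (p-1) = 1) (hp0 : (p:k) = 0)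
    (hC1 : ∀ i j : ℕ, 1 ≤ i → i ≤ p - 1 → 1 ≤ j → j ≤ p - 1 →
        α i (j - 1) * (1 - q ^ (i - 1)) + β (i - 1) j * (1 - q ^ (j - 1)) = 0)
    (hC2 : ∀ j : ℕ, 1 ≤ j → j ≤ p - 1 → α 0 (j-1) = 0)
    (hC3 : ∀ i : ℕ, 1 ≤ i → i ≤ p - 1 → β (i-1) 0 = 0) :
    ∀ a c : A, (b.constr k (fun ij : Fin p × Fin p => FF q p α β x y ij.1 ij.2)) (a * c)
      = a * (b.constr k (fun ij : Fin p × Fin p => FF q p α β x y ij.1 ij.2)) c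
        + (b.constr k (fun ij : Fin p × Fin p => FF q p α β x y ij.1 ij.2)) a * c := by
  set f := b.constr k (fun ij : Fin p × Fin p => FF q p α β x y ij.1 ij.2) with hf
  have key : (LinearMap.mk₂ k (fun a c : A => f (a * c))
      (fun a₁ a₂ c => by rw [add_mul, map_add])
      (fun r a c => by rw [smul_mul_assoc, map_smul])
      (fun a c₁ c₂ => by rw [mul_add, map_add])
      (fun r a c => by rw [mul_smul_comm, map_smul]))
      = (LinearMap.mk₂ k (fun a c : A => a * f c + f a * c)
      (fun a₁ a₂ c => by rw [add_mul, map_add, add_mul]; abel)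
      (fun r a c => by rw [smul_mul_assoc, map_smul, smul_mul_assoc, smul_add])
      (fun a c₁ c₂ => by rw [mul_add, map_add, mul_add]; abel)
      (fun r a c => by rw [mul_smul_comm, map_smul, mul_smul_comm, smul_add])) := by
    refine b.ext fun ij => ?_
    refine b.ext fun kl => ?_
    simp only [LinearMap.mk₂_apply]
    have h1 : b ij = mon x y ij.1 ij.2 := hb ij
    have h2 : b kl = mon x y kl.1 kl.2 := hb kl
    rw [h1, h2, mon_mul hyx, map_smul, f_mon b hb hx hy hp2 hqp1 hp0 hC2 hC3,
      f_mon b hb hx hy hp2 hqp1 hp0 hC2 hC3, f_mon b hb hx hy hp2 hqp1 hp0 hC2 hC3,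
      FF_leibniz hyx hx hy hp2 hqp1 hC1 hC2 hC3]
  intro a c
  exact DFunLike.congr_fun (DFunLike.congr_fun key a) c

end basis
end QCI

namespace QCI
variable {k : Type*} [Field k] {A : Type*} [Ring A] [Algebra k A]
variable {p : ℕ} {q : k} {x y : A} {α β : ℕ → ℕ → k}

lemma y_mul_mon (hyx : y * x = q • (x * y)) (c d : ℕ) :
    y * mon x y c d = (q ^ c) • mon x y c (d+1) := by
  unfold mon
  rw [← mul_assoc, y_xpow hyx, smul_mul_assoc, mul_assoc, ← pow_succ']

lemma mon_mul_y (c d : ℕ) : mon x y c d * y = mon x y c (d+1) := by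
  unfold mon
  rw [mul_assoc, ← pow_succ]

lemma x_mul_mon (c d : ℕ) : x * mon x y c d = mon x y (c+1) d := by
  unfold mon
  rw [← mul_assoc, ← pow_succ']

lemma mon_mul_x (hyx : y * x = q • (x * y)) (c d : ℕ) :
    mon x y c d * x = (q ^ d) • mon x y (c+1) d := by
  have h := ypow_xpow hyx d 1
  simp only [pow_one, mul_one] at h
  unfold mon
  rw [mul_assoc, h, mul_smul_comm, ← mul_assoc, ← pow_succ]

section basis
variable (b : Module.Basis (Fin p × Fin p) k A)

lemma coord_mon (hb : ∀ ij : Fin p × Fin p, b ij = x ^ (ij.1 : ℕ) * y ^ (ij.2 : ℕ))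
    (hx : x ^ p = 0) (hy : y ^ p = 0) (I J : Fin p) (u v : ℕ) :
    b.coord (I, J) (mon x y u v) = if (u = (I:ℕ) ∧ v = (J:ℕ)) then 1 else 0 := by
  by_cases h : u < p ∧ v < p
  · rw [← b_mon b hb h.1 h.2, Module.Basis.coord_apply, Module.Basis.repr_self, Finsupp.single_apply]
    simp [Prod.ext_iff, Fin.ext_iff, eq_comm]
  · rw [mon_zero hx hy (by omega), map_zero, if_neg]
    rintro ⟨h1, h2⟩
    exact h ⟨h1 ▸ I.isLt, h2 ▸ J.isLt⟩

lemma collapse (g : ℕ → ℕ → k) {u v : ℕ} (hu : u < p) (hv : v < p) :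
    ∑ c ∈ range p, ∑ d ∈ range p, g c d * (if (c = u ∧ d = v) then 1 else 0) = g u v := by
  rw [Finset.sum_eq_single_of_mem u (mem_range.mpr hu)
    (fun c _ hc => Finset.sum_eq_zero fun d _ => by rw [if_neg (fun h' => hc h'.1), mul_zero]),
    Finset.sum_eq_single_of_mem v (mem_range.mpr hv)
    (fun d _ hd => by rw [if_neg (fun h' => hd h'.2), mul_zero]),
    if_pos ⟨rfl, rfl⟩, mul_one]

lemma coord_sum₁ (hb : ∀ ij : Fin p × Fin p, b ij = x ^ (ij.1 : ℕ) * y ^ (ij.2 : ℕ))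
    (hx : x ^ p = 0) (hy : y ^ p = 0) (I J : Fin p) (g : ℕ → ℕ → k) :
    b.coord (I, J) (∑ c ∈ range p, ∑ d ∈ range p, g c d • mon x y c (d+1))
    = if 1 ≤ (J:ℕ) then g (I:ℕ) ((J:ℕ)-1) else 0 := by
  rw [map_sum]
  have h1 : ∀ c : ℕ, b.coord (I, J) (∑ d ∈ range p, g c d • mon x y c (d+1))
      = ∑ d ∈ range p, g c d * (if (c = (I:ℕ) ∧ d + 1 = (J:ℕ)) then 1 else 0) := by
    intro c
    rw [map_sum]
    exact Finset.sum_congr rfl fun d _ => by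
      rw [map_smul, coord_mon b hb hx hy, smul_eq_mul]
  rw [Finset.sum_congr rfl fun c _ => h1 c]
  by_cases hJ : 1 ≤ (J:ℕ)
  · rw [if_pos hJ]
    have h2 : ∀ c d : ℕ, (if (c = (I:ℕ) ∧ d + 1 = (J:ℕ)) then (1:k) else 0)
        = if (c = (I:ℕ) ∧ d = (J:ℕ)-1) then 1 else 0 := by
      intro c d
      exact if_congr (by omega) rfl rfl
    rw [Finset.sum_congr rfl fun c _ => Finset.sum_congr rfl fun d _ => by rw [h2 c d]]
    exact collapse g I.isLt (by omega)
  · rw [if_neg hJ]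
    refine Finset.sum_eq_zero fun c _ => Finset.sum_eq_zero fun d _ => ?_
    rw [if_neg (by omega), mul_zero]

lemma coord_sum₂ (hb : ∀ ij : Fin p × Fin p, b ij = x ^ (ij.1 : ℕ) * y ^ (ij.2 : ℕ))
    (hx : x ^ p = 0) (hy : y ^ p = 0) (I J : Fin p) (g : ℕ → ℕ → k) :
    b.coord (I, J) (∑ c ∈ range p, ∑ d ∈ range p, g c d • mon x y (c+1) d)
    = if 1 ≤ (I:ℕ) then g ((I:ℕ)-1) (J:ℕ) else 0 := by
  rw [map_sum]
  have h1 : ∀ c : ℕ, b.coord (I, J) (∑ d ∈ range p, g c d • mon x y (c+1) d)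
      = ∑ d ∈ range p, g c d * (if (c + 1 = (I:ℕ) ∧ d = (J:ℕ)) then 1 else 0) := by
    intro c
    rw [map_sum]
    exact Finset.sum_congr rfl fun d _ => by
      rw [map_smul, coord_mon b hb hx hy, smul_eq_mul]
  rw [Finset.sum_congr rfl fun c _ => h1 c]
  by_cases hI : 1 ≤ (I:ℕ)
  · rw [if_pos hI]
    have h2 : ∀ c d : ℕ, (if (c + 1 = (I:ℕ) ∧ d = (J:ℕ)) then (1:k) else 0)
        = if (c = (I:ℕ)-1 ∧ d = (J:ℕ)) then 1 else 0 := by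
      intro c d
      exact if_congr (by omega) rfl rfl
    rw [Finset.sum_congr rfl fun c _ => Finset.sum_congr rfl fun d _ => by rw [h2 c d]]
    exact collapse g (by omega) J.isLt
  · rw [if_neg hI]
    refine Finset.sum_eq_zero fun c _ => Finset.sum_eq_zero fun d _ => ?_
    rw [if_neg (by omega), mul_zero]

end basis
end QCI

namespace QCI
variable {k : Type*} [Field k] {A : Type*} [Ring A] [Algebra k A]
variable {p : ℕ} {q : k} {x y : A} {α β : ℕ → ℕ → k}
variable (b : Module.Basis (Fin p × Fin p) k A)

lemma forward (hb : ∀ ij : Fin p × Fin p, b ij = x ^ (ij.1 : ℕ) * y ^ (ij.2 : ℕ))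
    (hyx : y * x = q • (x * y)) (hx : x ^ p = 0) (hy : y ^ p = 0)
    (hp2 : 2 ≤ p) (hq0 : q ≠ 0) (hq1 : q ≠ 1)
    (f : Module.End k A)
    (hder : ∀ a c : A, f (a * c) = a * f c + f a * c)
    (hfx : f x = ∑ c ∈ range p, ∑ d ∈ range p, α c d • mon x y c d)
    (hfy : f y = ∑ c ∈ range p, ∑ d ∈ range p, β c d • mon x y c d) :
    (∀ i j : ℕ, 1 ≤ i → i ≤ p - 1 → 1 ≤ j → j ≤ p - 1 →
        α i (j - 1) * (1 - q ^ (i - 1)) + β (i - 1) j * (1 - q ^ (j - 1)) = 0)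
    ∧ (∀ j : ℕ, 1 ≤ j → j ≤ p - 1 → α 0 (j-1) = 0)
    ∧ (∀ i : ℕ, 1 ≤ i → i ≤ p - 1 → β (i-1) 0 = 0) := by
  -- the fundamental relation
  have h1 : q • (x * f y + f x * y) = y * f x + f y * x := by
    have h := hder y x
    rw [hyx, map_smul, hder x y] at h
    exact h
  rw [hfx, hfy] at h1
  have e1 : y * (∑ c ∈ range p, ∑ d ∈ range p, α c d • mon x y c d)
      = ∑ c ∈ range p, ∑ d ∈ range p, (α c d * q ^ c) • mon x y c (d+1) := by
    rw [Finset.mul_sum]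
    refine Finset.sum_congr rfl fun c _ => ?_
    rw [Finset.mul_sum]
    refine Finset.sum_congr rfl fun d _ => ?_
    rw [mul_smul_comm, y_mul_mon hyx, smul_smul]
  have e2 : (∑ c ∈ range p, ∑ d ∈ range p, β c d • mon x y c d) * x
      = ∑ c ∈ range p, ∑ d ∈ range p, (β c d * q ^ d) • mon x y (c+1) d := by
    rw [Finset.sum_mul]
    refine Finset.sum_congr rfl fun c _ => ?_
    rw [Finset.sum_mul]
    refine Finset.sum_congr rfl fun d _ => ?_
    rw [smul_mul_assoc, mon_mul_x hyx, smul_smul]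
  have e3 : x * (∑ c ∈ range p, ∑ d ∈ range p, β c d • mon x y c d)
      = ∑ c ∈ range p, ∑ d ∈ range p, β c d • mon x y (c+1) d := by
    rw [Finset.mul_sum]
    refine Finset.sum_congr rfl fun c _ => ?_
    rw [Finset.mul_sum]
    refine Finset.sum_congr rfl fun d _ => ?_
    rw [mul_smul_comm, x_mul_mon]
  have e4 : (∑ c ∈ range p, ∑ d ∈ range p, α c d • mon x y c d) * y
      = ∑ c ∈ range p, ∑ d ∈ range p, α c d • mon x y c (d+1) := by
    rw [Finset.sum_mul]
    refine Finset.sum_congr rfl fun c _ => ?_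
    rw [Finset.sum_mul]
    refine Finset.sum_congr rfl fun d _ => ?_
    rw [smul_mul_assoc, mon_mul_y]
  rw [e1, e2, e3, e4, smul_add, Finset.smul_sum, Finset.smul_sum] at h1
  have e5 : ∀ c : ℕ, q • (∑ d ∈ range p, β c d • mon x y (c+1) d)
      = ∑ d ∈ range p, (β c d * q) • mon x y (c+1) d := by
    intro c
    rw [Finset.smul_sum]
    exact Finset.sum_congr rfl fun d _ => by rw [smul_smul, mul_comm]
  have e6 : ∀ c : ℕ, q • (∑ d ∈ range p, α c d • mon x y c (d+1))
      = ∑ d ∈ range p, (α c d * q) • mon x y c (d+1) := by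
    intro c
    rw [Finset.smul_sum]
    exact Finset.sum_congr rfl fun d _ => by rw [smul_smul, mul_comm]
  rw [Finset.sum_congr rfl fun c _ => e5 c, Finset.sum_congr rfl fun c _ => e6 c] at h1
  -- h1 : ΣΣ (β*q)•m₂ + ΣΣ (α*q)•m₁ = ΣΣ (α*q^c)•m₁ + ΣΣ (β*q^d)•m₂
  have hE : (∑ c ∈ range p, ∑ d ∈ range p, (α c d * (q^c - q)) • mon x y c (d+1))
      + (∑ c ∈ range p, ∑ d ∈ range p, (β c d * (q^d - q)) • mon x y (c+1) d) = 0 := by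
    have split1 : (∑ c ∈ range p, ∑ d ∈ range p, (α c d * (q^c - q)) • mon x y c (d+1))
        = (∑ c ∈ range p, ∑ d ∈ range p, (α c d * q^c) • mon x y c (d+1))
          - (∑ c ∈ range p, ∑ d ∈ range p, (α c d * q) • mon x y c (d+1)) := by
      rw [← Finset.sum_sub_distrib]
      refine Finset.sum_congr rfl fun c _ => ?_
      rw [← Finset.sum_sub_distrib]
      exact Finset.sum_congr rfl fun d _ => by rw [← sub_smul, ← mul_sub]
    have split2 : (∑ c ∈ range p, ∑ d ∈ range p, (β c d * (q^d - q)) • mon x y (c+1) d)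
        = (∑ c ∈ range p, ∑ d ∈ range p, (β c d * q^d) • mon x y (c+1) d)
          - (∑ c ∈ range p, ∑ d ∈ range p, (β c d * q) • mon x y (c+1) d) := by
      rw [← Finset.sum_sub_distrib]
      refine Finset.sum_congr rfl fun c _ => ?_
      rw [← Finset.sum_sub_distrib]
      exact Finset.sum_congr rfl fun d _ => by rw [← sub_smul, ← mul_sub]
    rw [split1, split2, sub_add_sub_comm, ← h1, add_comm, sub_self]
  -- extract coefficients
  have extract : ∀ (I J : Fin p),
      (if 1 ≤ (J:ℕ) then α (I:ℕ) ((J:ℕ)-1) * (q^((I:ℕ)) - q) else 0)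
      + (if 1 ≤ (I:ℕ) then β ((I:ℕ)-1) (J:ℕ) * (q^((J:ℕ)) - q) else 0) = 0 := by
    intro I J
    have h := congrArg (b.coord (I, J)) hE
    rw [map_add, map_zero, coord_sum₁ b hb hx hy, coord_sum₂ b hb hx hy] at h
    exact h
  refine ⟨?_, ?_, ?_⟩
  · intro i j hi1 hi2 hj1 hj2
    have h := extract ⟨i, by omega⟩ ⟨j, by omega⟩
    simp only [if_pos (show 1 ≤ i from hi1), if_pos (show 1 ≤ j from hj1)] at h
    have hqi : q ^ i = q ^ (i-1) * q := by
      rw [← pow_succ]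
      congr 1
      omega
    have hqj : q ^ j = q ^ (j-1) * q := by
      rw [← pow_succ]
      congr 1
      omega
    have key : q * (α i (j - 1) * (1 - q ^ (i - 1)) + β (i - 1) j * (1 - q ^ (j - 1))) = 0 := by
      linear_combination (-1) * h + (α i (j-1)) * hqi + (β (i-1) j) * hqj
    exact (mul_eq_zero.mp key).resolve_left hq0
  · intro j hj1 hj2
    have h := extract ⟨0, by omega⟩ ⟨j, by omega⟩
    simp only [if_pos (show 1 ≤ j from hj1), if_neg (show ¬ (1:ℕ) ≤ ((⟨0, by omega⟩ : Fin p):ℕ) by simp),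
      add_zero, pow_zero] at h
    have h1q : (1:k) - q ≠ 0 := sub_ne_zero.mpr (Ne.symm hq1)
    exact (mul_eq_zero.mp h).resolve_right h1q
  · intro i hi1 hi2
    have h := extract ⟨i, by omega⟩ ⟨0, by omega⟩
    simp only [if_pos (show 1 ≤ i from hi1), if_neg (show ¬ (1:ℕ) ≤ ((⟨0, by omega⟩ : Fin p):ℕ) by simp),
      zero_add, pow_zero] at h
    have h1q : (1:k) - q ≠ 0 := sub_ne_zero.mpr (Ne.symm hq1)
    exact (mul_eq_zero.mp h).resolve_right h1q

end QCI

namespace QCI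
variable {k : Type*} [Field k] {A : Type*} [Ring A] [Algebra k A]
variable {p : ℕ} {q : k} {x y : A}
variable (b : Module.Basis (Fin p × Fin p) k A)

section jac
variable (hb : ∀ ij : Fin p × Fin p, b ij = x ^ (ij.1 : ℕ) * y ^ (ij.2 : ℕ))
  (hyx : y * x = q • (x * y)) (hx : x ^ p = 0) (hy : y ^ p = 0) (hp2 : 2 ≤ p)

/-- the coordinate functional at (0,0) -/
noncomputable def φ : A →ₗ[k] k :=
  b.coord (⟨0, by omega⟩, ⟨0, by omega⟩)

include hb hyx hx hy hp2

lemma φ_mon (u v : ℕ) :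
    φ b hp2 (mon x y u v) = if (u = 0 ∧ v = 0) then 1 else 0 := by
  unfold φ
  rw [coord_mon b hb hx hy]

lemma φ_one : φ b hp2 (1 : A) = 1 := by
  have h : (mon x y 0 0 : A) = 1 := by simp [mon]
  rw [← h, φ_mon b hb hyx hx hy hp2, if_pos ⟨rfl, rfl⟩]

lemma φ_bb (kl ij : Fin p × Fin p) (hne : ¬((kl.1:ℕ) + ij.1 = 0 ∧ (kl.2:ℕ) + ij.2 = 0)) :
    φ b hp2 (b kl * b ij) = 0 := by
  rw [show b kl = mon x y kl.1 kl.2 from hb kl, show b ij = mon x y ij.1 ij.2 from hb ij,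
    mon_mul hyx, map_smul, φ_mon b hb hyx hx hy hp2, if_neg hne, smul_zero]

lemma φ_mul_basis (a : A) (ij : Fin p × Fin p) (hij : ¬((ij.1:ℕ) = 0 ∧ (ij.2:ℕ) = 0)) :
    φ b hp2 (a * b ij) = 0 := by
  conv_lhs => rw [← b.sum_repr a]
  rw [Finset.sum_mul, map_sum]
  refine Finset.sum_eq_zero fun kl _ => ?_
  rw [smul_mul_assoc, map_smul, φ_bb b hb hyx hx hy hp2 kl ij (by omega), smul_eq_mul, mul_zero]

lemma φ_basis_mul (a : A) (ij : Fin p × Fin p) (hij : ¬((ij.1:ℕ) = 0 ∧ (ij.2:ℕ) = 0)) :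
    φ b hp2 (b ij * a) = 0 := by
  conv_lhs => rw [← b.sum_repr a]
  rw [Finset.mul_sum, map_sum]
  refine Finset.sum_eq_zero fun kl _ => ?_
  rw [mul_smul_comm, map_smul, φ_bb b hb hyx hx hy hp2 ij kl (by omega), smul_eq_mul, mul_zero]

omit hb hyx hx hy in
lemma idx_ne (ij : Fin p × Fin p) (h : ij ≠ (⟨0, by omega⟩, ⟨0, by omega⟩)) :
    ¬((ij.1:ℕ) = 0 ∧ (ij.2:ℕ) = 0) := by
  rintro ⟨h1, h2⟩
  exact h (Prod.ext (Fin.ext h1) (Fin.ext h2))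

lemma φ_mul_left {n : A} (hn : φ b hp2 n = 0) (a : A) : φ b hp2 (a * n) = 0 := by
  conv_lhs => rw [← b.sum_repr n]
  rw [Finset.mul_sum, map_sum]
  refine Finset.sum_eq_zero fun ij _ => ?_
  by_cases hij : ij = ((⟨0, by omega⟩ : Fin p), (⟨0, by omega⟩ : Fin p))
  · subst hij
    have h0 : b.repr n ((⟨0, by omega⟩ : Fin p), (⟨0, by omega⟩ : Fin p)) = 0 := by
      rw [← Module.Basis.coord_apply]; exact hn
    rw [h0, zero_smul, mul_zero, map_zero]
  · rw [mul_smul_comm, map_smul,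
      φ_mul_basis b hb hyx hx hy hp2 a ij (idx_ne hp2 ij hij), smul_eq_mul, mul_zero]

lemma φ_mul_right {n : A} (hn : φ b hp2 n = 0) (a : A) : φ b hp2 (n * a) = 0 := by
  conv_lhs => rw [← b.sum_repr n]
  rw [Finset.sum_mul, map_sum]
  refine Finset.sum_eq_zero fun ij _ => ?_
  by_cases hij : ij = ((⟨0, by omega⟩ : Fin p), (⟨0, by omega⟩ : Fin p))
  · subst hij
    have h0 : b.repr n ((⟨0, by omega⟩ : Fin p), (⟨0, by omega⟩ : Fin p)) = 0 := by
      rw [← Module.Basis.coord_apply]; exact hn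
    rw [h0, zero_smul, zero_mul, map_zero]
  · rw [smul_mul_assoc, map_smul,
      φ_basis_mul b hb hyx hx hy hp2 a ij (idx_ne hp2 ij hij), smul_eq_mul, mul_zero]

end jac
end QCI

namespace QCI
variable {k : Type*} [Field k] {A : Type*} [Ring A] [Algebra k A]
variable {p : ℕ} {q : k} {x y : A}
variable (b : Module.Basis (Fin p × Fin p) k A)

/-- degree filtration -/
def D (k : Type*) [Field k] [Algebra k A] (x y : A) (r : ℕ) : Submodule k A :=
  Submodule.span k {a : A | ∃ u v : ℕ, r ≤ u + v ∧ a = mon x y u v}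

lemma D_mul (hyx : y * x = q • (x * y)) {r s : ℕ} {a c : A}
    (ha : a ∈ D k x y r) (hc : c ∈ D k x y s) : a * c ∈ D k x y (r + s) := by
  induction ha using Submodule.span_induction with
  | mem a' ha' =>
    induction hc using Submodule.span_induction with
    | mem c' hc' =>
      obtain ⟨u, v, huv, rfl⟩ := ha'
      obtain ⟨u', v', huv', rfl⟩ := hc'
      rw [mon_mul hyx]
      exact Submodule.smul_mem _ _ (Submodule.subset_span ⟨u+u', v+v', by omega, rfl⟩)
    | zero => rw [mul_zero]; exact zero_mem _
    | add c₁ c₂ _ _ h1 h2 => rw [mul_add]; exact add_mem h1 h2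
    | smul t c' _ h => rw [mul_smul_comm]; exact Submodule.smul_mem _ _ h
  | zero => rw [zero_mul]; exact zero_mem _
  | add a₁ a₂ _ _ h1 h2 => rw [add_mul]; exact add_mem h1 h2
  | smul t a' _ h => rw [smul_mul_assoc]; exact Submodule.smul_mem _ _ h

lemma D_top (hx : x ^ p = 0) (hy : y ^ p = 0) {a : A} (ha : a ∈ D k x y (2*p-1)) : a = 0 := by
  have hle : D k x y (2*p-1) ≤ ⊥ := by
    rw [D, Submodule.span_le]
    rintro a' ⟨u, v, huv, rfl⟩
    simp only [SetLike.mem_coe, Submodule.mem_bot]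
    exact mon_zero hx hy (by omega)
  simpa using hle ha

lemma nilp (hyx : y * x = q • (x * y)) (hx : x ^ p = 0) (hy : y ^ p = 0) (hp2 : 2 ≤ p)
    {n : A} (hn : n ∈ D k x y 1) : n ^ (2*p-1) = 0 := by
  have key : ∀ m : ℕ, n ^ (m+1) ∈ D k x y (m+1) := by
    intro m
    induction m with
    | zero => simpa using hn
    | succ m ih =>
      rw [pow_succ]
      exact D_mul hyx ih hn
  have h := key (2*p-2)
  rw [show 2*p-2+1 = 2*p-1 by omega] at h
  exact D_top hx hy h

lemma mem_D1 (hb : ∀ ij : Fin p × Fin p, b ij = x ^ (ij.1 : ℕ) * y ^ (ij.2 : ℕ))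
    (hp2 : 2 ≤ p) {n : A} (hn : φ b hp2 n = 0) : n ∈ D k x y 1 := by
  rw [← b.sum_repr n]
  refine Submodule.sum_mem _ fun ij _ => ?_
  by_cases hij : ij = ((⟨0, by omega⟩ : Fin p), (⟨0, by omega⟩ : Fin p))
  · subst hij
    have h0 : b.repr n ((⟨0, by omega⟩ : Fin p), (⟨0, by omega⟩ : Fin p)) = 0 := by
      rw [← Module.Basis.coord_apply]; exact hn
    rw [h0, zero_smul]
    exact zero_mem _
  · refine Submodule.smul_mem _ _ (Submodule.subset_span ?_)
    exact ⟨ij.1, ij.2, by have := idx_ne hp2 ij hij; omega, hb ij⟩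

/-- the maximal ideal -/
def NI (b : Module.Basis (Fin p × Fin p) k A)
    (hb : ∀ ij : Fin p × Fin p, b ij = x ^ (ij.1 : ℕ) * y ^ (ij.2 : ℕ))
    (hyx : y * x = q • (x * y)) (hx : x ^ p = 0) (hy : y ^ p = 0) (hp2 : 2 ≤ p) : Ideal A where
  carrier := {a : A | φ b hp2 a = 0}
  add_mem' := by
    intro a c ha hc
    simp only [Set.mem_setOf_eq, map_add] at *
    rw [ha, hc, add_zero]
  zero_mem' := by simp only [Set.mem_setOf_eq, map_zero]
  smul_mem' := by
    intro a n hn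
    simp only [Set.mem_setOf_eq, smul_eq_mul] at *
    exact φ_mul_left b hb hyx hx hy hp2 hn a

lemma mem_NI {hb : ∀ ij : Fin p × Fin p, b ij = x ^ (ij.1 : ℕ) * y ^ (ij.2 : ℕ)}
    {hyx : y * x = q • (x * y)} {hx : x ^ p = 0} {hy : y ^ p = 0} {hp2 : 2 ≤ p} {a : A} :
    a ∈ NI b hb hyx hx hy hp2 ↔ φ b hp2 a = 0 := Iff.rfl

lemma NI_maximal (hb : ∀ ij : Fin p × Fin p, b ij = x ^ (ij.1 : ℕ) * y ^ (ij.2 : ℕ))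
    (hyx : y * x = q • (x * y)) (hx : x ^ p = 0) (hy : y ^ p = 0) (hp2 : 2 ≤ p) :
    (NI b hb hyx hx hy hp2).IsMaximal := by
  rw [Ideal.isMaximal_def]
  constructor
  · intro htop
    have h1 : (1:A) ∈ NI b hb hyx hx hy hp2 := htop ▸ Submodule.mem_top
    rw [mem_NI, φ_one b hb hyx hx hy hp2] at h1
    exact one_ne_zero h1
  · intro J hJ
    obtain ⟨hle, a, haJ, haN⟩ := SetLike.lt_iff_le_and_exists.mp hJ
    have hc : φ b hp2 a ≠ 0 := fun h => haN (mem_NI b |>.mpr h)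
    have hnm : a - (φ b hp2 a) • 1 ∈ NI b hb hyx hx hy hp2 := by
      rw [mem_NI, map_sub, map_smul, φ_one b hb hyx hx hy hp2, smul_eq_mul, mul_one, sub_self]
    have h1J : (φ b hp2 a) • (1:A) ∈ J := by
      rw [← sub_sub_cancel a ((φ b hp2 a) • 1)]
      exact Submodule.sub_mem J haJ (hle hnm)
    have hone : (1:A) ∈ J := by
      have h2 := Submodule.smul_mem J (algebraMap k A (φ b hp2 a)⁻¹) h1J
      rw [smul_eq_mul, ← Algebra.smul_def, smul_smul, inv_mul_cancel₀ hc, one_smul] at h2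
      exact h2
    exact (Ideal.eq_top_iff_one J).mpr hone

lemma jac_eq (hb : ∀ ij : Fin p × Fin p, b ij = x ^ (ij.1 : ℕ) * y ^ (ij.2 : ℕ))
    (hyx : y * x = q • (x * y)) (hx : x ^ p = 0) (hy : y ^ p = 0) (hp2 : 2 ≤ p) :
    Ideal.jacobson (⊥ : Ideal A) = NI b hb hyx hx hy hp2 := by
  apply le_antisymm
  · exact sInf_le ⟨bot_le, NI_maximal b hb hyx hx hy hp2⟩
  · intro n hn
    rw [mem_NI] at hn
    rw [Ideal.jacobson]
    refine Submodule.mem_sInf.mpr ?_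
    rintro J ⟨-, hJmax⟩
    by_contra hnJ
    have hmem : n ∈ J ⊔ Ideal.span {n} :=
      Submodule.mem_sup_right (Ideal.subset_span (Set.mem_singleton n))
    have hlt : J < J ⊔ Ideal.span {n} :=
      lt_of_le_of_ne le_sup_left (fun heq => hnJ (by rw [← heq] at hmem; exact hmem))
    have htop := hJmax.out.2 _ hlt
    have h1 : (1:A) ∈ J ⊔ Ideal.span {n} := htop ▸ Submodule.mem_top
    obtain ⟨z, hz, w, hw, hzw⟩ := Submodule.mem_sup.mp h1
    obtain ⟨a, rfl⟩ := Submodule.mem_span_singleton.mp hw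
    have hw0 : φ b hp2 (a * n) = 0 := φ_mul_left b hb hyx hx hy hp2 hn a
    have hnil : (a * n) ^ (2*p-1) = 0 :=
      nilp hyx hx hy hp2 (mem_D1 b hb hp2 hw0)
    have hz' : z = 1 - a * n := by
      rw [smul_eq_mul] at hzw
      rw [eq_sub_iff_add_eq, hzw]
    have hgeom : (∑ i ∈ Finset.range (2*p-1), (a*n)^i) * z = 1 := by
      rw [hz', show (1 : A) - a*n = -((a*n) - 1) from (neg_sub _ _).symm, mul_neg,
        geom_sum_mul, hnil]
      simp
    have honeJ : (1:A) ∈ J := by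
      have h2 := Submodule.smul_mem J (∑ i ∈ Finset.range (2*p-1), (a*n)^i) hz
      rw [smul_eq_mul, hgeom] at h2
      exact h2
    exact hJmax.out.1 ((Ideal.eq_top_iff_one J).mpr honeJ)

end QCI

namespace QCI
open Finset
variable {k : Type*} [Field k] {A : Type*} [Ring A] [Algebra k A]
variable {p : ℕ} {q : k} {x y : A}
variable (b : Module.Basis (Fin p × Fin p) k A)

lemma repr_expand (hb : ∀ ij : Fin p × Fin p, b ij = x ^ (ij.1 : ℕ) * y ^ (ij.2 : ℕ))
    (a' : A) :
    a' = ∑ i ∈ range p, ∑ j ∈ range p,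
        (if h : i < p ∧ j < p then b.repr a' (⟨i, h.1⟩, ⟨j, h.2⟩) else 0) • mon x y i j := by
  calc a' = ∑ ij : Fin p × Fin p, b.repr a' ij • b ij := (b.sum_repr a').symm
    _ = ∑ i : Fin p, ∑ j : Fin p, b.repr a' (i, j) • b (i, j) := by
        rw [Fintype.sum_prod_type]
    _ = ∑ i : Fin p, ∑ j : Fin p,
        (if h : (i:ℕ) < p ∧ (j:ℕ) < p then b.repr a' (⟨(i:ℕ), h.1⟩, ⟨(j:ℕ), h.2⟩) else 0)
          • mon x y (i:ℕ) (j:ℕ) := by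
        refine Finset.sum_congr rfl fun i _ => Finset.sum_congr rfl fun j _ => ?_
        rw [dif_pos ⟨i.isLt, j.isLt⟩]
        simp only [Fin.eta]
        rw [hb (i, j)]
        rfl
    _ = ∑ i : Fin p, ∑ j ∈ range p,
        (if h : (i:ℕ) < p ∧ j < p then b.repr a' (⟨(i:ℕ), h.1⟩, ⟨j, h.2⟩) else 0)
          • mon x y (i:ℕ) j := by
        refine Finset.sum_congr rfl fun i _ => ?_
        exact Fin.sum_univ_eq_sum_range
          (fun j => (if h : (i:ℕ) < p ∧ j < p then b.repr a' (⟨(i:ℕ), h.1⟩, ⟨j, h.2⟩) else 0)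
            • mon x y (i:ℕ) j) p
    _ = _ := by
        exact Fin.sum_univ_eq_sum_range
          (fun i => ∑ j ∈ range p,
            (if h : i < p ∧ j < p then b.repr a' (⟨i, h.1⟩, ⟨j, h.2⟩) else 0) • mon x y i j) p

lemma f_pres (hb : ∀ ij : Fin p × Fin p, b ij = x ^ (ij.1 : ℕ) * y ^ (ij.2 : ℕ))
    (hyx : y * x = q • (x * y)) (hx : x ^ p = 0) (hy : y ^ p = 0) (hp2 : 2 ≤ p)
    (f : Module.End k A) (hder : ∀ a c : A, f (a * c) = a * f c + f a * c)
    (hfx0 : φ b hp2 (f x) = 0) (hfy0 : φ b hp2 (f y) = 0)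
    {n : A} (hn : φ b hp2 n = 0) : φ b hp2 (f n) = 0 := by
  have hxm : φ b hp2 x = 0 := by
    have h1 : (mon x y 1 0 : A) = x := by simp [mon]
    rw [← h1, φ_mon b hb hyx hx hy hp2, if_neg (by omega)]
  have hym : φ b hp2 y = 0 := by
    have h1 : (mon x y 0 1 : A) = y := by simp [mon]
    rw [← h1, φ_mon b hb hyx hx hy hp2, if_neg (by omega)]
  have hmon : ∀ i j : ℕ, ¬(i = 0 ∧ j = 0) → φ b hp2 (f (mon x y i j)) = 0 := by
    intro i j hij
    rcases Nat.eq_zero_or_pos i with hi | hi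
    · subst hi
      have hj : 1 ≤ j := by omega
      have h2 : mon x y 0 j = y * mon x y 0 (j-1) := by
        rw [y_mul_mon hyx, pow_zero, one_smul, show j-1+1 = j by omega]
      rw [h2, hder, map_add]
      rw [φ_mul_right b hb hyx hx hy hp2 hym, φ_mul_right b hb hyx hx hy hp2 hfy0, add_zero]
    · have h2 : mon x y i j = x * mon x y (i-1) j := by
        rw [x_mul_mon, show i-1+1 = i by omega]
      rw [h2, hder, map_add]
      rw [φ_mul_right b hb hyx hx hy hp2 hxm, φ_mul_right b hb hyx hx hy hp2 hfx0, add_zero]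
  conv_lhs => rw [← b.sum_repr n]
  rw [map_sum, map_sum]
  refine Finset.sum_eq_zero fun ij _ => ?_
  by_cases hij : ij = ((⟨0, by omega⟩ : Fin p), (⟨0, by omega⟩ : Fin p))
  · subst hij
    have h0 : b.repr n ((⟨0, by omega⟩ : Fin p), (⟨0, by omega⟩ : Fin p)) = 0 := by
      rw [← Module.Basis.coord_apply]; exact hn
    rw [h0, zero_smul, map_zero, map_zero]
  · rw [map_smul, map_smul, smul_eq_mul,
      show b ij = mon x y ij.1 ij.2 from hb ij,
      hmon ij.1 ij.2 (idx_ne hp2 ij hij), mul_zero]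

end QCI


/-- Lemma (coefficient conditions for derivations): for coefficients `α_{i,j}, β_{i,j}`,
there is a derivation `f` of `A` with `f(x) = Σ α_{i,j} x^i y^j` and
`f(y) = Σ β_{i,j} x^i y^j` if and only if
(1) `α_{i,j−1}(1 − q^{i−1}) + β_{i−1,j}(1 − q^{j−1}) = 0` for `1 ≤ i,j ≤ p−1`,
(2) `α_{0,j−1} = 0` for `1 ≤ j ≤ p−1`, and
(3) `β_{i−1,0} = 0` for `1 ≤ i ≤ p−1`.
In particular every derivation of `A` maps `J(A)` into `J(A)`. -/
theorem derivation_iff_coeff_conditions_quantum_complete_intersection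
    (k : Type*) [Field k] (p e : ℕ) (q : k)
    (hp : p.Prime) (hodd : Odd p) (hchar : CharP k p)
    (hq : orderOf q = e) (he : 2 ≤ e) (hediv : e ∣ p - 1)
    (A : Type*) [Ring A] [Algebra k A] (x y : A)
    (hx : x ^ p = 0) (hy : y ^ p = 0) (hyx : y * x = q • (x * y))
    (b : Module.Basis (Fin p × Fin p) k A)
    (hb : ∀ ij : Fin p × Fin p, b ij = x ^ (ij.1 : ℕ) * y ^ (ij.2 : ℕ))
    (α β : ℕ → ℕ → k) :
    ((∃ f : Module.End k A, IsDeriv k A f ∧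
      f x = ∑ i ∈ Finset.range p, ∑ j ∈ Finset.range p, α i j • (x ^ i * y ^ j) ∧
      f y = ∑ i ∈ Finset.range p, ∑ j ∈ Finset.range p, β i j • (x ^ i * y ^ j)) ↔
      ((∀ i j : ℕ, 1 ≤ i → i ≤ p - 1 → 1 ≤ j → j ≤ p - 1 →
        α i (j - 1) * (1 - q ^ (i - 1)) + β (i - 1) j * (1 - q ^ (j - 1)) = 0) ∧
      (∀ j : ℕ, 1 ≤ j → j ≤ p - 1 → α 0 (j - 1) = 0) ∧
      (∀ i : ℕ, 1 ≤ i → i ≤ p - 1 → β (i - 1) 0 = 0))) ∧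
    ∀ f : Module.End k A, IsDeriv k A f →
      ∀ a ∈ Ideal.jacobson (⊥ : Ideal A), f a ∈ Ideal.jacobson (⊥ : Ideal A) := by
  classical
  haveI := hchar
  obtain ⟨m, hm⟩ := hodd
  have hp2 : 2 ≤ p := hp.two_le
  have hqe : q ^ e = 1 := by rw [← hq]; exact pow_orderOf_eq_one q
  have hq0 : q ≠ 0 := by
    intro h
    rw [h, zero_pow (by omega : e ≠ 0)] at hqe
    exact zero_ne_one hqe
  have hq1 : q ≠ 1 := by
    intro h
    rw [h, orderOf_one] at hq
    omega
  have hqp1 : q ^ (p - 1) = 1 := orderOf_dvd_iff_pow_eq_one.mp (hq ▸ hediv)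
  have hp0 : (p : k) = 0 := CharP.cast_eq_zero k p
  constructor
  · constructor
    · rintro ⟨f, hfder, hfx, hfy⟩
      exact QCI.forward b hb hyx hx hy hp2 hq0 hq1 f hfder hfx hfy
    · rintro ⟨hC1, hC2, hC3⟩
      refine ⟨b.constr k (fun ij : Fin p × Fin p => QCI.FF q p α β x y ij.1 ij.2),
        QCI.f_deriv b hb hyx hx hy hp2 hqp1 hp0 hC1 hC2 hC3, ?_, ?_⟩
      · have h1 : (QCI.mon x y 1 0 : A) = x := by simp [QCI.mon]
        have h2 := congrArg (b.constr k (fun ij : Fin p × Fin p => QCI.FF q p α β x y ij.1 ij.2)) h1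
        rw [← h2, QCI.f_mon b hb hx hy hp2 hqp1 hp0 hC2 hC3, QCI.FF_x hp2]
        rfl
      · have h1 : (QCI.mon x y 0 1 : A) = y := by simp [QCI.mon]
        have h2 := congrArg (b.constr k (fun ij : Fin p × Fin p => QCI.FF q p α β x y ij.1 ij.2)) h1
        rw [← h2, QCI.f_mon b hb hx hy hp2 hqp1 hp0 hC2 hC3, QCI.FF_y hp2]
        rfl
  · intro f hfder a ha
    rw [QCI.jac_eq b hb hyx hx hy hp2] at ha ⊢
    rw [QCI.mem_NI] at ha ⊢
    obtain ⟨hC1, hC2, hC3⟩ := QCI.forward b hb hyx hx hy hp2 hq0 hq1 f hfder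
      (QCI.repr_expand b hb (f x)) (QCI.repr_expand b hb (f y))
    have hfx0 : QCI.φ b hp2 (f x) = 0 := by
      have h := hC2 1 le_rfl (by omega)
      rw [dif_pos ⟨by omega, by omega⟩] at h
      rw [QCI.φ, Module.Basis.coord_apply]
      exact h
    have hfy0 : QCI.φ b hp2 (f y) = 0 := by
      have h := hC3 1 le_rfl (by omega)
      rw [dif_pos ⟨by omega, by omega⟩] at h
      rw [QCI.φ, Module.Basis.coord_apply]
      exact h
    exact QCI.f_pres b hb hyx hx hy hp2 f hfder hfx0 hfy0 ha
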